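/- The image of the structure group of a finite cycle set under the monomial representation is permutation-free: the only permutation matrix it contains is the identity. -/

import Mathlib

/-- The permutation matrix of `σ`: row `i` has a `1` in column `σ i`. -/
def Pmat {ι : Type*} [DecidableEq ι] (R : Type*) [Semiring R] (σ : Equiv.Perm ι) :
    Matrix ι ι R := Matrix.of fun i j => if j = σ i then 1 else 0

/-- The diagonal matrix `D_s = diag(1,…,q,…,1)` with `q` in position `s`. -/
noncomputable def Dmat {S : Type*} [DecidableEq S] (s : S) : Matrix S S (Polynomial ℚ) :=
  Matrix.diagonal fun t => if t = s then Polynomial.X else 1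

/-- The permutation `ψ(s) : t ↦ s * t` attached to an element of a cycle set. -/
noncomputable def psi {S : Type*} (op : S → S → S) (hbij : ∀ s : S, Function.Bijective (op s))
    (s : S) : Equiv.Perm S := Equiv.ofBijective (op s) (hbij s)

/-- The monomial matrix `Θ(s) = D_s P_{ψ(s)}` associated to a generator. -/
noncomputable def theta {S : Type*} [Fintype S] [DecidableEq S] (op : S → S → S)
    (hbij : ∀ s : S, Function.Bijective (op s)) (s : S) : Matrix S S (Polynomial ℚ) :=
  Dmat s * Pmat (Polynomial ℚ) (psi op hbij s)
/-- The defining relators of the structure group: `s (s*t) (t (t*s))⁻¹`. -/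
def csGrpRels {S : Type*} (op : S → S → S) : Set (FreeGroup S) :=
  { r | ∃ s t : S, r = FreeGroup.of s * FreeGroup.of (op s t) *
      (FreeGroup.of t * FreeGroup.of (op t s))⁻¹ }

/-- The structure group `⟨S ∣ s(s*t) = t(t*s)⟩` of a cycle set. -/
abbrev StructureGroup {S : Type*} (op : S → S → S) := PresentedGroup (csGrpRels op)

/-- The diagonal matrix `D_s` over Laurent polynomials, with `q` in position `s`. -/
noncomputable def DmatL {S : Type*} [DecidableEq S] (s : S) :
    Matrix S S (LaurentPolynomial ℚ) :=
  Matrix.diagonal fun t => if t = s then LaurentPolynomial.T 1 else 1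
namespace CSAux
set_option linter.unusedSectionVars false
set_option maxRecDepth 8000

variable {S : Type*} [DecidableEq S]

/-- Monomial data: an exponent vector and a permutation, encoding the monomial
matrix `D^v P_α`. -/
@[ext] structure MonData (S : Type*) where
  v : S → ℤ
  p : Equiv.Perm S

namespace MonData

variable {T : Type*}

instance (S : Type*) : Group (MonData S) where
  mul a b := ⟨a.v + fun i => b.v (a.p i), b.p * a.p⟩
  one := ⟨0, 1⟩
  inv a := ⟨fun i => -a.v (a.p⁻¹ i), a.p⁻¹⟩
  mul_assoc a b c := by
    refine MonData.ext (funext fun i => ?_) ?_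
    · show (a.v i + b.v (a.p i)) + c.v ((b.p * a.p) i)
        = a.v i + (b.v (a.p i) + c.v (b.p (a.p i)))
      simp [Equiv.Perm.mul_apply, add_assoc]
    · show c.p * (b.p * a.p) = (c.p * b.p) * a.p
      rw [mul_assoc]
  one_mul a := by
    refine MonData.ext (funext fun i => ?_) ?_
    · show (0 : S → ℤ) i + a.v ((1 : Equiv.Perm S) i) = a.v i
      simp
    · show a.p * 1 = a.p
      simp
  mul_one a := by
    refine MonData.ext (funext fun i => ?_) ?_
    · show a.v i + (0 : S → ℤ) (a.p i) = a.v i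
      simp
    · show (1 : Equiv.Perm S) * a.p = a.p
      simp
  inv_mul_cancel a := by
    refine MonData.ext (funext fun i => ?_) ?_
    · show -a.v (a.p⁻¹ i) + a.v (a.p⁻¹ i) = (0 : S → ℤ) i
      simp
    · show a.p * a.p⁻¹ = 1
      simp

@[simp] lemma mul_v (a b : MonData S) : (a * b).v = a.v + fun i => b.v (a.p i) := rfl
@[simp] lemma mul_p (a b : MonData S) : (a * b).p = b.p * a.p := rfl
@[simp] lemma one_v : (1 : MonData S).v = 0 := rfl
@[simp] lemma one_p : (1 : MonData S).p = 1 := rfl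

end MonData

variable [Fintype S]

/-- The monomial matrix attached to monomial data, as a multiplicative map. -/
noncomputable def toMat : MonData S →* Matrix S S (LaurentPolynomial ℚ) where
  toFun z := Matrix.of fun i j => if j = z.p i then LaurentPolynomial.T (z.v i) else 0
  map_one' := by
    refine Matrix.ext fun i j => ?_
    simp only [Matrix.of_apply, MonData.one_v, MonData.one_p, Equiv.Perm.one_apply,
      Pi.zero_apply, LaurentPolynomial.T_zero, Matrix.one_apply]
    by_cases h : i = j
    · subst h; simp
    · simp [h, Ne.symm h]
  map_mul' a b := by
    refine Matrix.ext fun i j => ?_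
    rw [Matrix.mul_apply, Finset.sum_eq_single (a.p i)]
    · simp only [Matrix.of_apply, MonData.mul_v, MonData.mul_p, Equiv.Perm.mul_apply,
        Pi.add_apply]
      by_cases hj : j = b.p (a.p i)
      · simp only [hj, eq_self_iff_true]
        simp only [if_true]
        exact LaurentPolynomial.T_add _ _
      · simp [hj]
    · intro k _ hk
      simp only [Matrix.of_apply]
      rw [if_neg hk, zero_mul]
    · intro hmem
      exact absurd (Finset.mem_univ _) hmem

lemma T_ne (n : ℤ) : (LaurentPolynomial.T n : LaurentPolynomial ℚ) ≠ 0 :=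
  (LaurentPolynomial.isUnit_T n).ne_zero

lemma toMat_injective : Function.Injective (toMat (S := S)) := by
  intro a b h
  have h' : ∀ i j, (if j = a.p i then LaurentPolynomial.T (a.v i) else 0)
      = (if j = b.p i then LaurentPolynomial.T (b.v i) else (0 : LaurentPolynomial ℚ)) := by
    intro i j
    have := Matrix.ext_iff.2 h i j
    simpa [toMat] using this
  have hp : ∀ i, a.p i = b.p i := by
    intro i
    have h2 := h' i (a.p i)
    rw [if_pos rfl] at h2
    by_contra hne
    rw [if_neg hne] at h2
    exact T_ne _ h2
  have hv : ∀ i, a.v i = b.v i := by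
    intro i
    have h2 := h' i (a.p i)
    rw [if_pos rfl, if_pos (hp i)] at h2
    exact AddMonoidAlgebra.single_left_injective (one_ne_zero (α := ℚ)) h2
  exact MonData.ext (funext hv) (Equiv.ext hp)

variable (op : S → S → S) (hbij : ∀ s : S, Function.Bijective (op s))

@[simp] lemma psi_apply (s t : S) : psi op hbij s t = op s t := rfl

/-- The generator `(e_s, ψ_s)`. -/
noncomputable def gens (s : S) : MonData S := ⟨fun i => if i = s then 1 else 0, psi op hbij s⟩

variable (hcs : ∀ s t u : S, op (op s t) (op s u) = op (op t s) (op t u))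

include hcs in
lemma gens_rel : ∀ r ∈ csGrpRels op, FreeGroup.lift (gens op hbij) r = 1 := by
  rintro r ⟨s, t, rfl⟩
  rw [map_mul, map_mul, map_inv, map_mul, FreeGroup.lift_apply_of, FreeGroup.lift_apply_of,
    FreeGroup.lift_apply_of, FreeGroup.lift_apply_of, mul_inv_eq_one]
  refine MonData.ext (funext fun i => ?_) ?_
  · show (if i = s then (1:ℤ) else 0) + (if psi op hbij s i = op s t then 1 else 0)
      = (if i = t then (1:ℤ) else 0) + (if psi op hbij t i = op t s then 1 else 0)
    simp only [psi_apply, (hbij s).1.eq_iff, (hbij t).1.eq_iff]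
    rw [add_comm]
  · show psi op hbij (op s t) * psi op hbij s = psi op hbij (op t s) * psi op hbij t
    ext u
    simp [Equiv.Perm.mul_apply, hcs s t u]

/-- Holonomy of a positive path (head of the list is the last step). -/
noncomputable def gf : List S → Equiv.Perm S
  | [] => 1
  | u :: l => psi op hbij (gf l u) * gf l

@[simp] lemma gf_nil : gf op hbij ([] : List S) = 1 := rfl

lemma gf_cons (u : S) (l : List S) :
    gf op hbij (u :: l) = psi op hbij (gf op hbij l u) * gf op hbij l := rfl

@[simp] lemma gf_singleton (s : S) : gf op hbij [s] = psi op hbij s := by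
  simp [gf_cons]

include hcs in
lemma gf_perm {l l' : List S} (h : l.Perm l') : gf op hbij l = gf op hbij l' := by
  induction h with
  | nil => rfl
  | cons x h ih => rw [gf_cons, gf_cons, ih]
  | swap x y l =>
      rw [gf_cons, gf_cons, gf_cons, gf_cons]
      set α := gf op hbij l
      ext u
      simp only [Equiv.Perm.mul_apply, psi_apply]
      exact hcs (α x) (α y) (α u)
  | trans h₁ h₂ ih₁ ih₂ => rw [ih₁, ih₂]

/-- The monomial data of a positive path. -/
noncomputable def Pl (l : List S) : MonData S := ⟨fun i => (l.count i : ℤ), gf op hbij l⟩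

@[simp] lemma Pl_nil : Pl op hbij ([] : List S) = 1 := by
  refine MonData.ext (funext fun i => ?_) ?_ <;> simp [Pl]

include hcs in
lemma Pl_perm {l l' : List S} (h : l.Perm l') : Pl op hbij l = Pl op hbij l' := by
  refine MonData.ext (funext fun i => ?_) (gf_perm op hbij hcs h)
  simp [Pl, h.count_eq]

lemma Pl_mul_single (l : List S) (s : S) :
    Pl op hbij l * Pl op hbij [s] = Pl op hbij ((gf op hbij l)⁻¹ s :: l) := by
  refine MonData.ext (funext fun i => ?_) ?_
  · show (l.count i : ℤ) + ((([s] : List S).count (gf op hbij l i) : ℕ) : ℤ)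
      = (((gf op hbij l)⁻¹ s :: l).count i : ℤ)
    simp only [List.count_cons, List.count_nil, beq_iff_eq, Nat.zero_add, zero_add]
    have h3 : ((gf op hbij l)⁻¹ s = i) ↔ (s = (gf op hbij l) i) :=
      Equiv.Perm.inv_eq_iff_eq
    rw [if_congr h3 rfl rfl]
    push_cast
    split <;> push_cast <;> ring
  · show gf op hbij [s] * gf op hbij l = gf op hbij ((gf op hbij l)⁻¹ s :: l)
    simp [gf_cons, Equiv.apply_symm_apply]

lemma Pl_cons (u : S) (l : List S) :
    Pl op hbij (u :: l) = Pl op hbij l * Pl op hbij [gf op hbij l u] := by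
  rw [Pl_mul_single, Equiv.Perm.inv_eq_iff_eq.2 rfl]

lemma Pl_mul (y x : List S) :
    Pl op hbij x * Pl op hbij y = Pl op hbij (y.map ⇑(gf op hbij x)⁻¹ ++ x) := by
  induction y with
  | nil => simp
  | cons u y' ih =>
      have hgf : gf op hbij (y'.map ⇑(gf op hbij x)⁻¹ ++ x)
          = gf op hbij y' * gf op hbij x := by
        have := congrArg MonData.p ih
        simpa [Pl] using this.symm
      rw [Pl_cons, ← mul_assoc, ih, Pl_mul_single, hgf]
      have : (gf op hbij y' * gf op hbij x)⁻¹ (gf op hbij y' u) = (gf op hbij x)⁻¹ u := by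
        simp [Equiv.Perm.mul_apply]
      rw [this]
      rfl

include hcs in
lemma Pl_swap (b : List S) (s : S) :
    (Pl op hbij b)⁻¹ * Pl op hbij [s]
      = Pl op hbij [gf op hbij b s] * (Pl op hbij (b.map (op s)))⁻¹ := by
  have h1 : Pl op hbij b * Pl op hbij [gf op hbij b s] = Pl op hbij (s :: b) := by
    rw [Pl_mul_single, Equiv.Perm.inv_eq_iff_eq.2 rfl]
  have h2 : Pl op hbij [s] * Pl op hbij (b.map (op s)) = Pl op hbij (s :: b) := by
    rw [Pl_mul]
    have : (b.map (op s)).map ⇑(gf op hbij [s])⁻¹ = b := by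
      rw [List.map_map]
      have h4 : ⇑(gf op hbij [s])⁻¹ ∘ (op s) = id := by
        funext i
        have h5 : op s i = gf op hbij [s] i := by rw [gf_singleton, psi_apply]
        rw [Function.comp_apply, h5, Equiv.Perm.inv_eq_iff_eq.2 rfl, id_eq]
      rw [h4, List.map_id]
    rw [this]
    exact Pl_perm op hbij hcs (List.perm_append_singleton s b)
  rw [inv_mul_eq_iff_eq_mul, ← mul_assoc, h1, ← h2, mul_assoc, mul_inv_cancel, mul_one]

include hcs in
lemma ore (c b : List S) :
    ∃ e f : List S, (Pl op hbij b)⁻¹ * Pl op hbij c = Pl op hbij e * (Pl op hbij f)⁻¹ := by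
  induction c with
  | nil => exact ⟨[], b, by rw [Pl_nil, mul_one, one_mul]⟩
  | cons u c' ih =>
      obtain ⟨e', f', h⟩ := ih
      refine ⟨([gf op hbij f' (gf op hbij c' u)].map ⇑(gf op hbij e')⁻¹) ++ e',
        f'.map (op (gf op hbij c' u)), ?_⟩
      rw [Pl_cons, ← mul_assoc, h, mul_assoc, Pl_swap op hbij hcs, ← mul_assoc,
        Pl_mul op hbij]

lemma Pl_singleton (s : S) : Pl op hbij [s] = gens op hbij s := by
  refine MonData.ext (funext fun i => ?_) (gf_singleton op hbij s)
  show ((List.count i [s] : ℕ) : ℤ) = if i = s then 1 else 0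
  by_cases h : i = s
  · subst h
    rw [if_pos rfl, List.count_cons_self, List.count_nil]
    norm_num
  · rw [if_neg h]
    have h0 : List.count i [s] = 0 := by
      rw [List.count_eq_zero]
      simpa using h
    rw [h0]
    exact Nat.cast_zero

lemma gens_mat (s : S) :
    DmatL s * Pmat (LaurentPolynomial ℚ) (psi op hbij s) = toMat (gens op hbij s) := by
  refine Matrix.ext fun i j => ?_
  rw [DmatL, Matrix.diagonal_mul]
  show (if i = s then LaurentPolynomial.T 1 else 1) * (if j = psi op hbij s i then 1 else 0)
      = if j = psi op hbij s i then LaurentPolynomial.T (if i = s then 1 else 0) else 0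
  by_cases hj : j = psi op hbij s i
  · rw [if_pos hj, if_pos hj, mul_one]
    by_cases hi : i = s
    · rw [if_pos hi, if_pos hi]
    · rw [if_neg hi, if_neg hi, LaurentPolynomial.T_zero]
  · rw [if_neg hj, if_neg hj, mul_zero]

lemma toMat_perm (σ : Equiv.Perm S) :
    Pmat (LaurentPolynomial ℚ) σ = toMat (⟨0, σ⟩ : MonData S) := by
  refine Matrix.ext fun i j => ?_
  show (if j = σ i then 1 else 0) = if j = σ i then LaurentPolynomial.T ((0 : S → ℤ) i) else 0
  rw [Pi.zero_apply, LaurentPolynomial.T_zero]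

end CSAux

/-- The image of the structure group of a finite cycle set under the monomial
representation is permutation-free: the only permutation matrix it contains is the
identity. -/
theorem structureGroup_permutationFree {S : Type*} [Fintype S] [DecidableEq S]
    (op : S → S → S)
    (hbij : ∀ s : S, Function.Bijective (op s))
    (hcs : ∀ s t u : S, op (op s t) (op s u) = op (op t s) (op t u))
    (Θ : StructureGroup op →* Matrix S S (LaurentPolynomial ℚ))
    (hΘ : ∀ s : S, Θ (PresentedGroup.of (rels := csGrpRels op) s)
      = DmatL s * Pmat (LaurentPolynomial ℚ) (psi op hbij s))
    (g : StructureGroup op) (σ : Equiv.Perm S)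
    (hg : Θ g = Pmat (LaurentPolynomial ℚ) σ) :
    σ = 1 := by
  classical
  have hrel := CSAux.gens_rel op hbij hcs
  let Φ : StructureGroup op →* CSAux.MonData S := PresentedGroup.toGroup hrel
  have hΦof : ∀ s : S, Φ (PresentedGroup.of s) = CSAux.gens op hbij s := fun s =>
    PresentedGroup.toGroup.of hrel
  -- Θ agrees with toMat ∘ Φ
  have key : ∀ x : StructureGroup op, Θ x = CSAux.toMat (Φ x) := by
    let H : Subgroup (StructureGroup op) :=
      { carrier := {x | Θ x = CSAux.toMat (Φ x)}
        one_mem' := by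
          show Θ 1 = CSAux.toMat (Φ 1)
          rw [map_one, map_one, map_one]
        mul_mem' := by
          intro x y hx hy
          show Θ (x * y) = CSAux.toMat (Φ (x * y))
          rw [map_mul, map_mul, map_mul, hx, hy]
        inv_mem' := by
          intro x hx
          have hx' : Θ x = CSAux.toMat (Φ x) := hx
          show Θ x⁻¹ = CSAux.toMat (Φ x⁻¹)
          have h1 : Θ x⁻¹ * Θ x = 1 := by rw [← map_mul, inv_mul_cancel, map_one]
          have h2 : Θ x * CSAux.toMat (Φ x⁻¹) = 1 := by
            rw [hx', ← map_mul, ← map_mul, mul_inv_cancel, map_one, map_one]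
          exact left_inv_eq_right_inv h1 h2 }
    intro x
    have hx : x ∈ Subgroup.closure (Set.range (PresentedGroup.of (rels := csGrpRels op))) := by
      rw [PresentedGroup.closure_range_of]
      trivial
    have hle : Subgroup.closure (Set.range (PresentedGroup.of (rels := csGrpRels op))) ≤ H := by
      rw [Subgroup.closure_le]
      rintro _ ⟨s, rfl⟩
      show Θ (PresentedGroup.of s) = CSAux.toMat (Φ (PresentedGroup.of s))
      rw [hΘ s, hΦof s, CSAux.gens_mat]
    exact hle hx
  -- Φ g is the pure permutation σ
  have hPhi : Φ g = (⟨0, σ⟩ : CSAux.MonData S) := by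
    apply CSAux.toMat_injective
    rw [← key g, hg, CSAux.toMat_perm]
  -- every Φ-image is a fraction of positive elements
  let W : Subgroup (CSAux.MonData S) :=
    { carrier := {z | ∃ a b : List S, z = CSAux.Pl op hbij a * (CSAux.Pl op hbij b)⁻¹}
      one_mem' := ⟨[], [], by rw [CSAux.Pl_nil, inv_one, mul_one]⟩
      inv_mem' := by
        rintro x ⟨a, b, rfl⟩
        exact ⟨b, a, by rw [mul_inv_rev, inv_inv]⟩
      mul_mem' := by
        rintro x y ⟨a, b, rfl⟩ ⟨c, d, rfl⟩
        obtain ⟨e, f, hef⟩ := CSAux.ore op hbij hcs c b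
        refine ⟨(e.map ⇑(CSAux.gf op hbij a)⁻¹) ++ a, (f.map ⇑(CSAux.gf op hbij d)⁻¹) ++ d, ?_⟩
        rw [← CSAux.Pl_mul, ← CSAux.Pl_mul, mul_inv_rev]
        have hstep : CSAux.Pl op hbij a * (CSAux.Pl op hbij b)⁻¹ *
            (CSAux.Pl op hbij c * (CSAux.Pl op hbij d)⁻¹)
            = CSAux.Pl op hbij a * ((CSAux.Pl op hbij b)⁻¹ * CSAux.Pl op hbij c) *
              (CSAux.Pl op hbij d)⁻¹ := by
          group
        rw [hstep, hef]
        group }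
  have hWg : Φ g ∈ W := by
    have hx : g ∈ Subgroup.closure (Set.range (PresentedGroup.of (rels := csGrpRels op))) := by
      rw [PresentedGroup.closure_range_of]
      trivial
    have hle : Subgroup.closure (Set.range (PresentedGroup.of (rels := csGrpRels op)))
        ≤ W.comap Φ := by
      rw [Subgroup.closure_le]
      rintro _ ⟨s, rfl⟩
      show Φ (PresentedGroup.of s) ∈ W
      rw [hΦof s, ← CSAux.Pl_singleton op hbij s]
      exact ⟨[s], [], by rw [CSAux.Pl_nil, inv_one, mul_one]⟩
    exact hle hx
  obtain ⟨a, b, hab⟩ := hWg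
  rw [hPhi] at hab
  have hPa : CSAux.Pl op hbij a = (⟨0, σ⟩ : CSAux.MonData S) * CSAux.Pl op hbij b := by
    rw [hab, mul_assoc, inv_mul_cancel, mul_one]
  -- pad b to a list with constant multiplicity
  set N := b.length with hN
  let m : Multiset S := (N • (Finset.univ.val : Multiset S)) - (↑b : Multiset S)
  let z₀ : List S := m.toList
  have hz₀ : ∀ i : S, z₀.count i = N - b.count i := by
    intro i
    have h1 : z₀.count i = Multiset.count i m := by
      rw [← Multiset.coe_count, Multiset.coe_toList]
    rw [h1]
    show Multiset.count i ((N • (Finset.univ.val : Multiset S)) - (↑b : Multiset S))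
        = N - b.count i
    rw [Multiset.count_sub, Multiset.count_nsmul, Multiset.count_univ, Multiset.coe_count,
      mul_one]
  have hcount : ∀ i : S, (z₀ ++ b).count i = N := by
    intro i
    rw [List.count_append, hz₀ i]
    exact Nat.sub_add_cancel (List.count_le_length (a := i) (l := b))
  let z : List S := z₀.map ⇑(CSAux.gf op hbij b)
  have hbz : CSAux.Pl op hbij b * CSAux.Pl op hbij z = CSAux.Pl op hbij (z₀ ++ b) := by
    rw [CSAux.Pl_mul]
    have hmm : z.map ⇑(CSAux.gf op hbij b)⁻¹ = z₀ := by
      show (z₀.map ⇑(CSAux.gf op hbij b)).map ⇑(CSAux.gf op hbij b)⁻¹ = z₀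
      rw [List.map_map]
      have hid : ⇑(CSAux.gf op hbij b)⁻¹ ∘ ⇑(CSAux.gf op hbij b) = id :=
        funext fun i => Equiv.symm_apply_apply _ i
      rw [hid, List.map_id]
    rw [hmm]
  have hfinal : CSAux.Pl op hbij ((z.map ⇑(CSAux.gf op hbij a)⁻¹) ++ a)
      = (⟨0, σ⟩ : CSAux.MonData S) * CSAux.Pl op hbij (z₀ ++ b) := by
    rw [← CSAux.Pl_mul, hPa, mul_assoc, hbz]
  set A : List S := (z.map ⇑(CSAux.gf op hbij a)⁻¹) ++ a with hA
  have hv := congrArg CSAux.MonData.v hfinal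
  have hp := congrArg CSAux.MonData.p hfinal
  have hAcount : ∀ i : S, A.count i = N := by
    intro i
    have h2 : ((A.count i : ℕ) : ℤ) = ((0 : S → ℤ) i) + (((z₀ ++ b).count (σ i) : ℕ) : ℤ) :=
      congrFun hv i
    rw [Pi.zero_apply, zero_add, hcount (σ i)] at h2
    exact_mod_cast h2
  have hperm : A.Perm (z₀ ++ b) := by
    rw [List.perm_iff_count]
    intro i
    rw [hAcount i, hcount i]
  have hgf : CSAux.gf op hbij A = CSAux.gf op hbij (z₀ ++ b) :=
    CSAux.gf_perm op hbij hcs hperm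
  have hp2 : CSAux.gf op hbij A = CSAux.gf op hbij (z₀ ++ b) * σ := by
    rw [CSAux.MonData.mul_p] at hp
    exact hp
  rw [hgf] at hp2
  exact (mul_left_cancel (a := CSAux.gf op hbij (z₀ ++ b))
    (by rw [mul_one]; exact hp2)).symm
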